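/- Let F = ℚ(α, β) with α, β algebraically independent indeterminates over ℚ and let η ∈ {α, β}. The 3-dimensional commutative non-associative F-algebra 3C(η) with basis a₀, a₁, a₂ and multiplication a_i² = a_i and a_i a_j = (η/2)(a_i + a_j − a_k) for {i, j, k} = {0, 1, 2} is simple: its only ideals are 0 and the whole algebra. -/

import Mathlib

/-- The field `ℚ(α, β)` of rational functions in two algebraically independent
indeterminates over `ℚ`. -/
noncomputable abbrev QabF : Type := FractionRing (MvPolynomial (Fin 2) ℚ)


section generic
variable {F : Type*} [Field F] {V : Type*} [NonUnitalNonAssocCommRing V] [Module F V]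
    [SMulCommClass F V V] [IsScalarTower F V V]

private lemma mulx (η : F) (b : Module.Basis (Fin 3) F V)
    (hsq : ∀ i : Fin 3, b i * b i = b i)
    (hmul : ∀ i j k : Fin 3, i ≠ j → j ≠ k → i ≠ k →
      b i * b j = (η / 2) • (b i + b j - b k))
    {i j k : Fin 3} (hij : i ≠ j) (hjk : j ≠ k) (hik : i ≠ k) (p q r : F) :
    b i * (p • b i + q • b j + r • b k) =
      (p + η / 2 * (q + r)) • b i + (η / 2 * (q - r)) • b j + (η / 2 * (r - q)) • b k := by
  rw [mul_add, mul_add, mul_smul_comm, mul_smul_comm, mul_smul_comm, hsq i,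
    hmul i j k hij hjk hik, hmul i k j hik hjk.symm hij]
  module

-- step lemma: from b j - b k ∈ I, get all three basis vectors in I
private lemma step (η : F) (b : Module.Basis (Fin 3) F V)
    (hsq : ∀ i : Fin 3, b i * b i = b i)
    (hmul : ∀ i j k : Fin 3, i ≠ j → j ≠ k → i ≠ k →
      b i * b j = (η / 2) • (b i + b j - b k))
    (hη0 : η ≠ 0) (hη1 : η ≠ 1) (hη2 : η ≠ 2) (h2 : (2:F) ≠ 0)
    (I : Submodule F V) (hI : ∀ v : V, ∀ x ∈ I, v * x ∈ I)
    {i j k : Fin 3} (hij : i ≠ j) (hjk : j ≠ k) (hik : i ≠ k)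
    (hv : b j - b k ∈ I) : b i ∈ I ∧ b j ∈ I ∧ b k ∈ I := by
  have m1 : b j * (b j - b k) = (1 - η/2) • b j + (η/2) • b i + (-(η/2)) • b k := by
    rw [show b j - b k = (1:F) • b j + (-1:F) • b k + (0:F) • b i from by module,
      mulx η b hsq hmul hjk hik.symm hij.symm 1 (-1) 0]
    module
  have m2 : b k * (b j - b k) = (-(1 - η/2)) • b k + (-(η/2)) • b i + (η/2) • b j := by
    rw [show b j - b k = (-1:F) • b k + (1:F) • b j + (0:F) • b i from by module,
      mulx η b hsq hmul hjk.symm hij.symm hik.symm (-1) 1 0]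
    module
  have hw' : η • b i + (1-η) • b j + (1-η) • b k ∈ I := by
    have h := I.sub_mem (hI (b j) _ hv) (hI (b k) _ hv)
    rwa [show b j * (b j - b k) - b k * (b j - b k)
        = η • b i + (1-η) • b j + (1-η) • b k from by rw [m1, m2]; match_scalars <;> field_simp <;> ring] at h
  have hbi : b i ∈ I := by
    have h := hI (b i) _ hw'
    rw [mulx η b hsq hmul hij hjk hik η (1-η) (1-η)] at h
    have h' : (η*(2-η)) • b i ∈ I := by
      rwa [show (η + η / 2 * ((1-η) + (1-η))) • b i + (η / 2 * ((1-η) - (1-η))) • b j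
          + (η / 2 * ((1-η) - (1-η))) • b k = (η*(2-η)) • b i from by match_scalars <;> field_simp <;> ring] at h
    have hc : (η*(2-η)) ≠ 0 := mul_ne_zero hη0 (sub_ne_zero.mpr (Ne.symm hη2))
    have := I.smul_mem (η*(2-η))⁻¹ h'
    rwa [smul_smul, inv_mul_cancel₀ hc, one_smul] at this
  have hs : b j + b k ∈ I := by
    have h := I.sub_mem hw' (I.smul_mem η hbi)
    rw [show η • b i + (1-η) • b j + (1-η) • b k - η • b i
        = (1-η) • (b j + b k) from by module] at h
    have := I.smul_mem (1-η)⁻¹ h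
    rwa [smul_smul, inv_mul_cancel₀ (sub_ne_zero.mpr (Ne.symm hη1)), one_smul] at this
  have hbj : b j ∈ I := by
    have h := I.add_mem hs hv
    rw [show (b j + b k) + (b j - b k) = (2:F) • b j from by module] at h
    have := I.smul_mem (2:F)⁻¹ h
    rwa [smul_smul, inv_mul_cancel₀ h2, one_smul] at this
  have hbk : b k ∈ I := by
    have h := I.sub_mem hs hv
    rw [show (b j + b k) - (b j - b k) = (2:F) • b k from by module] at h
    have := I.smul_mem (2:F)⁻¹ h
    rwa [smul_smul, inv_mul_cancel₀ h2, one_smul] at this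
  exact ⟨hbi, hbj, hbk⟩

-- extraction: nonproportional coordinates give b j - b k ∈ I
private lemma getv (η : F) (b : Module.Basis (Fin 3) F V)
    (hsq : ∀ i : Fin 3, b i * b i = b i)
    (hmul : ∀ i j k : Fin 3, i ≠ j → j ≠ k → i ≠ k →
      b i * b j = (η / 2) • (b i + b j - b k))
    (hη0 : η ≠ 0) (hη1 : η ≠ 1) (h2 : (2:F) ≠ 0)
    (I : Submodule F V) (hI : ∀ v : V, ∀ x ∈ I, v * x ∈ I)
    {i j k : Fin 3} (hij : i ≠ j) (hjk : j ≠ k) (hik : i ≠ k)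
    {x : V} (hxI : x ∈ I) {p q r : F} (hx : x = p • b i + q • b j + r • b k)
    (hqr : q ≠ r) : b j - b k ∈ I := by
  have ez : b i * x = (p + η/2*(q+r)) • b i + (η/2*(q-r)) • b j + (-(η/2*(q-r))) • b k := by
    rw [hx, mulx η b hsq hmul hij hjk hik p q r]; module
  have ez2 : b i * (b i * x) = (p + η/2*(q+r)) • b i
      + (η*(η/2*(q-r))) • b j + (-(η*(η/2*(q-r)))) • b k := by
    rw [ez, mulx η b hsq hmul hij hjk hik (p + η/2*(q+r)) (η/2*(q-r)) (-(η/2*(q-r)))]; match_scalars <;> field_simp <;> ring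
  have h := I.sub_mem (hI (b i) _ (hI (b i) x hxI)) (hI (b i) x hxI)
  rw [show b i * (b i * x) - b i * x = ((η-1)*(η/2*(q-r))) • (b j - b k) from by
    rw [ez2, ez]; match_scalars <;> field_simp [h2] <;> ring] at h
  have hc : ((η-1)*(η/2*(q-r))) ≠ 0 :=
    mul_ne_zero (sub_ne_zero.mpr hη1) (mul_ne_zero (div_ne_zero hη0 h2) (sub_ne_zero.mpr hqr))
  have := I.smul_mem ((η-1)*(η/2*(q-r)))⁻¹ h
  rwa [smul_smul, inv_mul_cancel₀ hc, one_smul] at this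

end generic

private lemma simple3C {F : Type*} [Field F] {V : Type*} [NonUnitalNonAssocCommRing V]
    [Module F V] [SMulCommClass F V V] [IsScalarTower F V V]
    (η : F) (b : Module.Basis (Fin 3) F V)
    (hsq : ∀ i : Fin 3, b i * b i = b i)
    (hmul : ∀ i j k : Fin 3, i ≠ j → j ≠ k → i ≠ k →
      b i * b j = (η / 2) • (b i + b j - b k))
    (hη0 : η ≠ 0) (hη1 : η ≠ 1) (hη2 : η ≠ 2) (hηm1 : (1:F) + η ≠ 0) (h2 : (2:F) ≠ 0)
    (I : Submodule F V) (hI : ∀ v : V, ∀ x ∈ I, v * x ∈ I) :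
    I = ⊥ ∨ I = ⊤ := by
  by_cases hbot : I = ⊥
  · exact Or.inl hbot
  right
  obtain ⟨x, hxI, hx0⟩ := (Submodule.ne_bot_iff I).mp hbot
  obtain ⟨p, q, r, hx⟩ : ∃ p q r : F, x = p • b 0 + q • b 1 + r • b 2 := by
    refine ⟨b.repr x 0, b.repr x 1, b.repr x 2, ?_⟩
    have h := b.sum_repr x
    rw [Fin.sum_univ_three] at h
    exact h.symm
  have hb : ∀ l : Fin 3, b l ∈ I := by
    by_cases hA : p = q ∧ p = r
    · have hx' : x = p • b 0 + p • b 1 + p • b 2 := by rw [hx, ← hA.1, ← hA.2]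
      have hc0 : p ≠ 0 := by
        intro h
        apply hx0
        rw [hx', h]
        simp
      have key : ∀ (l j k : Fin 3), l ≠ j → j ≠ k → l ≠ k →
          x = p • b l + p • b j + p • b k → b l ∈ I := by
        intro l j k h1 h2' h3 hxl
        have e := mulx η b hsq hmul h1 h2' h3 p p p
        rw [← hxl] at e
        have h := hI (b l) x hxI
        rw [e, show (p + η/2*(p + p)) • b l + (η/2*(p - p)) • b j + (η/2*(p - p)) • b k
            = ((1+η)*p) • b l from by match_scalars <;> field_simp <;> ring] at h
        have hc : ((1+η)*p) ≠ 0 := mul_ne_zero hηm1 hc0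
        have := I.smul_mem ((1+η)*p)⁻¹ h
        rwa [smul_smul, inv_mul_cancel₀ hc, one_smul] at this
      have hb0 := key 0 1 2 (by decide) (by decide) (by decide) hx'
      have hb1 := key 1 0 2 (by decide) (by decide) (by decide) (by rw [hx']; module)
      have hb2 := key 2 0 1 (by decide) (by decide) (by decide) (by rw [hx']; module)
      intro l
      fin_cases l <;> assumption
    · rw [not_and_or] at hA
      rcases hA with h01 | h02
      · have hx2 : x = r • b 2 + p • b 0 + q • b 1 := by rw [hx]; module
        have hv := getv η b hsq hmul hη0 hη1 h2 I hI
          (show (2:Fin 3) ≠ 0 by decide) (show (0:Fin 3) ≠ 1 by decide)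
          (show (2:Fin 3) ≠ 1 by decide) hxI hx2 h01
        obtain ⟨m2, m0, m1⟩ := step η b hsq hmul hη0 hη1 hη2 h2 I hI
          (show (2:Fin 3) ≠ 0 by decide) (show (0:Fin 3) ≠ 1 by decide)
          (show (2:Fin 3) ≠ 1 by decide) hv
        intro l
        fin_cases l <;> assumption
      · have hx2 : x = q • b 1 + p • b 0 + r • b 2 := by rw [hx]; module
        have hv := getv η b hsq hmul hη0 hη1 h2 I hI
          (show (1:Fin 3) ≠ 0 by decide) (show (0:Fin 3) ≠ 2 by decide)
          (show (1:Fin 3) ≠ 2 by decide) hxI hx2 h02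
        obtain ⟨m1, m0, m2⟩ := step η b hsq hmul hη0 hη1 hη2 h2 I hI
          (show (1:Fin 3) ≠ 0 by decide) (show (0:Fin 3) ≠ 2 by decide)
          (show (1:Fin 3) ≠ 2 by decide) hv
        intro l
        fin_cases l <;> assumption
  rw [eq_top_iff, ← b.span_eq]
  exact Submodule.span_le.mpr (by rintro _ ⟨l, rfl⟩; exact hb l)

/-- The indeterminate `α` of `ℚ(α, β)`. -/
noncomputable def αQ : QabF := algebraMap (MvPolynomial (Fin 2) ℚ) QabF (MvPolynomial.X 0)

/-- The indeterminate `β` of `ℚ(α, β)`. -/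
noncomputable def βQ : QabF := algebraMap (MvPolynomial (Fin 2) ℚ) QabF (MvPolynomial.X 1)

/-- **Lemma 5.3.** Let `F = ℚ(α, β)` with `α, β` algebraically independent indeterminates over
`ℚ` and let `η ∈ {α, β}`.  The 3-dimensional commutative non-associative `F`-algebra `3C(η)`
with basis `a₀, a₁, a₂`, products `a_i² = a_i` and `a_i a_j = (η/2)(a_i + a_j − a_k)` for
`{i, j, k} = {0, 1, 2}`, is simple: its only ideals are `0` and the whole algebra. -/
theorem stmt_19 {V : Type*} [NonUnitalNonAssocCommRing V] [Module QabF V]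
    [SMulCommClass QabF V V] [IsScalarTower QabF V V]
    (η : QabF) (hη : η = αQ ∨ η = βQ)
    (b : Module.Basis (Fin 3) QabF V)
    (hsq : ∀ i : Fin 3, b i * b i = b i)
    (hmul : ∀ i j k : Fin 3, i ≠ j → j ≠ k → i ≠ k →
      b i * b j = (η / 2) • (b i + b j - b k))
    (I : Submodule QabF V) (hI : ∀ v : V, ∀ x ∈ I, v * x ∈ I) :
    I = ⊥ ∨ I = ⊤ := by
  have hinj : Function.Injective (algebraMap (MvPolynomial (Fin 2) ℚ) QabF) :=
    IsFractionRing.injective _ _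
  have hX : ∀ (n : Fin 2) (q : ℚ),
      (MvPolynomial.X n : MvPolynomial (Fin 2) ℚ) ≠ MvPolynomial.C q := by
    intro n q h
    have h0 := congrArg (MvPolynomial.eval (fun _ => (0:ℚ))) h
    have h1 := congrArg (MvPolynomial.eval (fun _ => (1:ℚ))) h
    simp only [MvPolynomial.eval_X, MvPolynomial.eval_C] at h0 h1
    exact one_ne_zero (h1.trans h0.symm)
  have hC : ∀ q : ℚ, η ≠ algebraMap (MvPolynomial (Fin 2) ℚ) QabF (MvPolynomial.C q) := by
    intro q h
    rcases hη with h' | h'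
    · subst h'
      exact hX 0 q (hinj h)
    · subst h'
      exact hX 1 q (hinj h)
  have hη0 : η ≠ 0 := fun h => hC 0 (by rw [h]; simp)
  have hη1 : η ≠ 1 := fun h => hC 1 (by rw [h]; simp)
  have hη2 : η ≠ 2 := fun h => hC 2 (by rw [h, map_ofNat, map_ofNat])
  have hηm1 : (1:QabF) + η ≠ 0 := fun h =>
    hC (-1) (by rw [eq_neg_of_add_eq_zero_right h]; simp)
  have h2 : (2:QabF) ≠ 0 := two_ne_zero
  exact simple3C η b hsq hmul hη0 hη1 hη2 hηm1 h2 I hI
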